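/- Let M : ℝⁿ → ℝ^{n×n} be continuously differentiable with M(q) symmetric and invertible for every q, let V : ℝⁿ → ℝ be differentiable, and define the Hamiltonian H(q,p) = (1/2)·pᵀM(q)⁻¹p + V(q). Let D : ℝⁿ → ℝ^{n×n}, let Λ, K_d be constant n×n matrices, and let q_d : ℝ → ℝⁿ be twice differentiable. Along a differentiable curve (q,p) : ℝ → ℝⁿ × ℝⁿ, define q̃(t) := q(t) − q_d(t), p_r(t) := M(q(t))·q_d'(t) − Λ·q̃(t), and σ(t) := p(t) − p_r(t). Suppose (q,p) satisfies q'(t) = M(q(t))⁻¹ p(t) and p'(t) = −∇_q H(q(t),p(t)) + w(t) − D(q(t)) M(q(t))⁻¹ p(t), where the input equals the tracking control law w(t) = p_r'(t) + [∇_q H(q, p̄)]_{p̄ = p_r(t)} + D(q)M(q)⁻¹p_r(t) − K_d M(q)⁻¹σ(t) − M(q)⁻¹Λ q̃(t) + [∇_q (aᵀ M(q)⁻¹ b)]_{a = p_r(t), b = σ(t)} (all gradients ∇_q taken with respect to the first argument q with the momentum-slot vectors held fixed, then evaluated along the curve). Then the error coordinates satisfy the closed-loop error system q̃'(t) = M(q(t))⁻¹(σ(t)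 − Λ q̃(t)) and σ'(t) = −M(q(t))⁻¹ Λ q̃(t) − [∇_q ((1/2)·bᵀ M(q)⁻¹ b)]_{b = σ(t)} − (D(q(t)) + K_d) M(q(t))⁻¹ σ(t). -/

import Mathlib

open Matrix

/-- The gradient (vector of partial derivatives) of a scalar function on `ℝⁿ` at `q`. -/
noncomputable def gradAt {n : ℕ} (f : (Fin n → ℝ) → ℝ) (q : Fin n → ℝ) : Fin n → ℝ :=
  fun i => fderiv ℝ f q (Pi.single i 1)

lemma det_differentiable {n : ℕ} (A : (Fin n → ℝ) → Matrix (Fin n) (Fin n) ℝ)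
    (hA : ∀ i j, Differentiable ℝ fun q => A q i j) :
    Differentiable ℝ fun q => (A q).det := by
  simp only [Matrix.det_apply']
  refine Differentiable.fun_sum fun σ _ => Differentiable.const_mul ?_ _
  intro x
  exact (HasFDerivAt.finset_prod (fun i _ => ((hA (σ i) i) x).hasFDerivAt)).differentiableAt

lemma inv_entry_diffAt {n : ℕ} (M : (Fin n → ℝ) → Matrix (Fin n) (Fin n) ℝ)
    (hMdiff : ∀ i j, Differentiable ℝ fun q => M q i j)
    (x : Fin n → ℝ) (hdet : (M x).det ≠ 0) (i j : Fin n) :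
    DifferentiableAt ℝ (fun q => (M q)⁻¹ i j) x := by
  have h1 : (fun q => (M q)⁻¹ i j)
      = fun q => ((M q).det)⁻¹ * ((M q).updateRow j (Pi.single i 1)).det := by
    funext q
    rw [Matrix.inv_def, Matrix.smul_apply, Ring.inverse_eq_inv', Matrix.adjugate_apply]
    rfl
  rw [h1]
  refine DifferentiableAt.mul (((det_differentiable M hMdiff) x).inv hdet) ?_
  refine (det_differentiable _ ?_ x)
  intro a b
  by_cases h : a = j
  · subst h; simp only [Matrix.updateRow_self]; exact differentiable_const _
  · simp only [Matrix.updateRow_apply, if_neg h]; exact hMdiff a b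

lemma dot_inv_diffAt {n : ℕ} (M : (Fin n → ℝ) → Matrix (Fin n) (Fin n) ℝ)
    (hMdiff : ∀ i j, Differentiable ℝ fun q => M q i j)
    (x : Fin n → ℝ) (hdet : (M x).det ≠ 0) (a b : Fin n → ℝ) :
    DifferentiableAt ℝ (fun q => a ⬝ᵥ ((M q)⁻¹ *ᵥ b)) x := by
  simp only [dotProduct, mulVec]
  exact DifferentiableAt.fun_sum fun i _ =>
    (DifferentiableAt.fun_sum fun j _ =>
      (inv_entry_diffAt M hMdiff x hdet i j).mul_const (b j)).const_mul (a i)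

lemma gradAt_add3 {n : ℕ} (f g h : (Fin n → ℝ) → ℝ) (x : Fin n → ℝ)
    (hf : DifferentiableAt ℝ f x) (hg : DifferentiableAt ℝ g x)
    (hh : DifferentiableAt ℝ h x) :
    gradAt (fun q => f q + g q + h q) x = gradAt f x + gradAt g x + gradAt h x := by
  funext i
  simp only [gradAt, Pi.add_apply]
  rw [fderiv_fun_add (f := fun y => f y + g y) (hf.add hg) hh, fderiv_fun_add hf hg]
  simp [gradAt]

lemma inv_symm {n : ℕ} (A : Matrix (Fin n) (Fin n) ℝ) (hA : A.IsSymm)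
    (v w : Fin n → ℝ) : v ⬝ᵥ (A⁻¹ *ᵥ w) = w ⬝ᵥ (A⁻¹ *ᵥ v) := by
  have hs : (A⁻¹)ᵀ = A⁻¹ := by rw [Matrix.transpose_nonsing_inv, hA.eq]
  rw [Matrix.dotProduct_mulVec, ← Matrix.mulVec_transpose, hs, dotProduct_comm]

/-- Substituting the tracking control law into the fully-actuated mechanical
port-Hamiltonian system yields the closed-loop error system (Proposition 1, item 1). -/
theorem closed_loop_error_dynamics
    {n : ℕ}
    (M : (Fin n → ℝ) → Matrix (Fin n) (Fin n) ℝ)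
    (hMdiff : ∀ i j, Differentiable ℝ fun q => M q i j)
    (hMsymm : ∀ q, (M q).IsSymm)
    (hMinv : ∀ q, IsUnit (M q).det)
    (V : (Fin n → ℝ) → ℝ) (hV : Differentiable ℝ V)
    (D : (Fin n → ℝ) → Matrix (Fin n) (Fin n) ℝ)
    (Λ Kd : Matrix (Fin n) (Fin n) ℝ)
    (qd qd' qd'' : ℝ → Fin n → ℝ)
    (hqd : ∀ t, HasDerivAt qd (qd' t) t)
    (hqd' : ∀ t, HasDerivAt qd' (qd'' t) t)
    (q p qe pr σ pr' w : ℝ → Fin n → ℝ)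
    -- error coordinates and auxiliary momentum reference
    (hqe : ∀ t, qe t = q t - qd t)
    (hpr : ∀ t, pr t = M (q t) *ᵥ qd' t - Λ *ᵥ qe t)
    (hσ : ∀ t, σ t = p t - pr t)
    (hpr' : ∀ t, HasDerivAt pr (pr' t) t)
    -- the port-Hamiltonian dynamics with input w
    (hq : ∀ t, HasDerivAt q ((M (q t))⁻¹ *ᵥ p t) t)
    (hp : ∀ t, HasDerivAt p
        (-(gradAt (fun q' => (1/2 : ℝ) * (p t ⬝ᵥ ((M q')⁻¹ *ᵥ p t)) + V q') (q t))
          + w t - D (q t) *ᵥ ((M (q t))⁻¹ *ᵥ p t)) t)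
    -- the input equals the proposed tracking control law
    (hw : ∀ t, w t =
        pr' t
        + gradAt (fun q' => (1/2 : ℝ) * (pr t ⬝ᵥ ((M q')⁻¹ *ᵥ pr t)) + V q') (q t)
        + D (q t) *ᵥ ((M (q t))⁻¹ *ᵥ pr t)
        - Kd *ᵥ ((M (q t))⁻¹ *ᵥ σ t)
        - (M (q t))⁻¹ *ᵥ (Λ *ᵥ qe t)
        + gradAt (fun q' => pr t ⬝ᵥ ((M q')⁻¹ *ᵥ σ t)) (q t)) :
    ∀ t,
      HasDerivAt qe ((M (q t))⁻¹ *ᵥ (σ t - Λ *ᵥ qe t)) t ∧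
      HasDerivAt σ
        (-((M (q t))⁻¹ *ᵥ (Λ *ᵥ qe t))
          - gradAt (fun q' => (1/2 : ℝ) * (σ t ⬝ᵥ ((M q')⁻¹ *ᵥ σ t))) (q t)
          - (D (q t) + Kd) *ᵥ ((M (q t))⁻¹ *ᵥ σ t)) t := by
  intro t
  have hdet : (M (q t)).det ≠ 0 := (hMinv (q t)).ne_zero
  have hpt : p t = pr t + σ t := by rw [hσ t]; abel
  constructor
  · have hqe_fun : qe = fun s => q s - qd s := funext fun s => hqe s
    have hd : HasDerivAt (fun s => q s - qd s) ((M (q t))⁻¹ *ᵥ p t - qd' t) t :=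
      (hq t).sub (hqd t)
    rw [← hqe_fun] at hd
    have h1 : (M (q t))⁻¹ *ᵥ (σ t - Λ *ᵥ qe t) = (M (q t))⁻¹ *ᵥ p t - qd' t := by
      have h2 : σ t - Λ *ᵥ qe t = p t - M (q t) *ᵥ qd' t := by rw [hσ t, hpr t]; abel
      rw [h2, Matrix.mulVec_sub, Matrix.mulVec_mulVec,
        Matrix.nonsing_inv_mul _ (hMinv (q t)), Matrix.one_mulVec]
    rw [h1]
    exact hd
  · have hσ_fun : σ = fun s => p s - pr s := funext fun s => hσ s
    have hd : HasDerivAt (fun s => p s - pr s)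
        ((-(gradAt (fun q' => (1/2 : ℝ) * (p t ⬝ᵥ ((M q')⁻¹ *ᵥ p t)) + V q') (q t))
          + w t - D (q t) *ᵥ ((M (q t))⁻¹ *ᵥ p t)) - pr' t) t := (hp t).sub (hpr' t)
    rw [← hσ_fun] at hd
    have hfun : (fun q' => (1/2 : ℝ) * (p t ⬝ᵥ ((M q')⁻¹ *ᵥ p t)) + V q')
        = fun q' => ((1/2 : ℝ) * (pr t ⬝ᵥ ((M q')⁻¹ *ᵥ pr t)) + V q')
            + (pr t ⬝ᵥ ((M q')⁻¹ *ᵥ σ t))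
            + ((1/2 : ℝ) * (σ t ⬝ᵥ ((M q')⁻¹ *ᵥ σ t))) := by
      funext q'
      rw [hpt, Matrix.mulVec_add, dotProduct_add, add_dotProduct,
        add_dotProduct, inv_symm (M q') (hMsymm q') (σ t) (pr t)]
      ring
    have hG : gradAt (fun q' => (1/2 : ℝ) * (p t ⬝ᵥ ((M q')⁻¹ *ᵥ p t)) + V q') (q t)
        = gradAt (fun q' => (1/2 : ℝ) * (pr t ⬝ᵥ ((M q')⁻¹ *ᵥ pr t)) + V q') (q t)
          + gradAt (fun q' => pr t ⬝ᵥ ((M q')⁻¹ *ᵥ σ t)) (q t)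
          + gradAt (fun q' => (1/2 : ℝ) * (σ t ⬝ᵥ ((M q')⁻¹ *ᵥ σ t))) (q t) := by
      rw [hfun]
      exact gradAt_add3 _ _ _ _
        (((dot_inv_diffAt M hMdiff (q t) hdet (pr t) (pr t)).const_mul _).add
          (hV.differentiableAt))
        (dot_inv_diffAt M hMdiff (q t) hdet (pr t) (σ t))
        ((dot_inv_diffAt M hMdiff (q t) hdet (σ t) (σ t)).const_mul _)
    have hsplit : D (q t) *ᵥ ((M (q t))⁻¹ *ᵥ p t)
        = D (q t) *ᵥ ((M (q t))⁻¹ *ᵥ pr t) + D (q t) *ᵥ ((M (q t))⁻¹ *ᵥ σ t) := by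
      rw [hpt, Matrix.mulVec_add, Matrix.mulVec_add]
    have hval : (-(gradAt (fun q' => (1/2 : ℝ) * (p t ⬝ᵥ ((M q')⁻¹ *ᵥ p t)) + V q') (q t))
          + w t - D (q t) *ᵥ ((M (q t))⁻¹ *ᵥ p t)) - pr' t
        = -((M (q t))⁻¹ *ᵥ (Λ *ᵥ qe t))
          - gradAt (fun q' => (1/2 : ℝ) * (σ t ⬝ᵥ ((M q')⁻¹ *ᵥ σ t))) (q t)
          - (D (q t) + Kd) *ᵥ ((M (q t))⁻¹ *ᵥ σ t) := by
      rw [hG, hw t, hsplit, Matrix.add_mulVec]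
      abel
    rw [← hval]
    exact hd
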